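/- arXiv:2001.02516 — 4 statements merged into one kernel-verified Lean document; each statement's English description precedes it below -/
import Mathlib

section
/- Let (ξ_k) be i.i.d. standard Gaussian random variables and X_n = (ξ_1, …, ξ_n, 0, 0, …) viewed as random elements of c₀ (real sequences converging to 0, with sup norm). Then the sequence (n^{-1/2} X_n)_n is not exponentially tight at speed g_n = n: for every compact set K ⊆ c₀, liminf_{n→∞} (1/n) log P(n^{-1/2} X_n ∉ K) = 0. -/
open MeasureTheory ProbabilityTheory Filter
open scoped ENNReal NNReal Topology

lemma compact_coord_small (K : Set (ZeroAtInftyContinuousMap ℕ ℝ)) (hK : IsCompact K)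
    {δ : ℝ} (hδ : 0 < δ) : ∃ k : ℕ, ∀ x ∈ K, |x k| < δ := by
  obtain ⟨t, htfin, hcov⟩ := (Metric.totallyBounded_iff.mp hK.totallyBounded) (δ/2) (by linarith)
  have hz : ∀ y : ZeroAtInftyContinuousMap ℕ ℝ, ∃ N : ℕ, ∀ m ≥ N, |y m| < δ/2 := by
    intro y
    have h1 : Tendsto (fun m : ℕ => y m) atTop (𝓝 0) := by
      have := zero_at_infty y
      rwa [cocompact_eq_cofinite, Nat.cofinite_eq_atTop] at this
    have h2 : ∀ᶠ m in atTop, |y m| < δ/2 := by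
      have := h1.abs
      simp only [abs_zero] at this
      exact this.eventually_lt_const (by linarith)
    exact h2.exists_forall_of_atTop
  choose N hN using hz
  refine ⟨htfin.toFinset.sup N, fun x hx => ?_⟩
  obtain ⟨y, hy, hxy⟩ := Set.mem_iUnion₂.mp (hcov hx)
  have hky : N y ≤ htfin.toFinset.sup N := Finset.le_sup (htfin.mem_toFinset.mpr hy)
  have h3 : |y (htfin.toFinset.sup N)| < δ/2 := hN y _ hky
  have h4 : |x (htfin.toFinset.sup N) - y (htfin.toFinset.sup N)| ≤ dist x y := by
    have : ‖(x - y) (htfin.toFinset.sup N)‖ ≤ ‖x - y‖ := by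
      rw [← ZeroAtInftyContinuousMap.norm_toBCF_eq_norm]
      exact (x - y).toBCF.norm_coe_le_norm _
    simpa [dist_eq_norm, ZeroAtInftyContinuousMap.sub_apply] using this
  have := Metric.mem_ball.mp hxy
  calc |x (htfin.toFinset.sup N)|
      = |(x (htfin.toFinset.sup N) - y (htfin.toFinset.sup N)) + y (htfin.toFinset.sup N)| := by
        ring_nf
    _ ≤ |x (htfin.toFinset.sup N) - y (htfin.toFinset.sup N)| + |y (htfin.toFinset.sup N)| :=
        abs_add_le _ _
    _ < δ/2 + δ/2 := add_lt_add_of_le_of_lt (h4.trans_lt this).le h3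
    _ = δ := by ring

/-- With `ξ_k` i.i.d. standard Gaussians and `X_n = (ξ_1,…,ξ_n,0,0,…) ∈ c₀`, the
sequence `(n^{-1/2} X_n)` is not exponentially tight at speed `g_n = n`: for every
compact `K ⊆ c₀`, `liminf (1/n) log P(n^{-1/2} X_n ∉ K) = 0`. -/
theorem stmt_14 {Ω : Type*} [MeasurableSpace Ω] (P : Measure Ω) [IsProbabilityMeasure P]
    (ξ : ℕ → Ω → ℝ) (hmeas : ∀ k, Measurable (ξ k))
    (hindep : iIndepFun ξ P)
    (hgauss : ∀ k, P.map (ξ k) = gaussianReal 0 1)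
    (X : ℕ → Ω → ZeroAtInftyContinuousMap ℕ ℝ)
    (hX : ∀ n ω k, X n ω k = if k < n then ξ k ω else 0) :
    ∀ K : Set (ZeroAtInftyContinuousMap ℕ ℝ), IsCompact K →
      liminf (fun n : ℕ => (((n : ℝ)⁻¹ : ℝ) : EReal) *
          ENNReal.log (P {ω | (Real.sqrt n)⁻¹ • X n ω ∉ K})) atTop = 0 := by
  intro K hK
  set F : ℕ → EReal := fun n : ℕ => (((n : ℝ)⁻¹ : ℝ) : EReal) *
      ENNReal.log (P {ω | (Real.sqrt n)⁻¹ • X n ω ∉ K}) with hF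
  apply le_antisymm
  · -- upper bound: each term is ≤ 0
    have h0 : ∀ n, F n ≤ 0 := by
      intro n
      have h1 : ENNReal.log (P {ω | (Real.sqrt n)⁻¹ • X n ω ∉ K}) ≤ 0 :=
        ENNReal.log_le_zero_iff.mpr prob_le_one
      have h2 : (0 : EReal) ≤ (((n : ℝ)⁻¹ : ℝ) : EReal) := by
        exact_mod_cast inv_nonneg.mpr (Nat.cast_nonneg n)
      calc F n ≤ (((n : ℝ)⁻¹ : ℝ) : EReal) * 0 := mul_le_mul_of_nonneg_left h1 h2
        _ = 0 := mul_zero _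
    calc liminf F atTop ≤ liminf (fun _ : ℕ => (0 : EReal)) atTop :=
          liminf_le_liminf (Eventually.of_forall h0)
      _ = 0 := liminf_const 0
  · -- lower bound
    have key : ∀ ε : ℝ, 0 < ε → ((-ε : ℝ) : EReal) ≤ liminf F atTop := by
      intro ε hε
      set δ : ℝ := min (Real.sqrt ε) 1 with hδdef
      have hδpos : 0 < δ := lt_min (Real.sqrt_pos.mpr hε) one_pos
      have hδsq : δ^2 ≤ ε := by
        have h1 : δ ≤ Real.sqrt ε := min_le_left _ _
        nlinarith [Real.sq_sqrt hε.le, Real.sqrt_nonneg ε, hδpos]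
      obtain ⟨k, hk⟩ := compact_coord_small K hK hδpos
      set L : ℝ := Real.log ((Real.sqrt (2 * Real.pi))⁻¹) with hL
      -- Step A: probability lower bound for n ≥ k+1
      have stepA : ∀ n : ℕ, k < n →
          ENNReal.ofReal ((Real.sqrt (2 * Real.pi))⁻¹ *
            Real.exp (-(δ * Real.sqrt n + 1)^2 / 2)) ≤
          P {ω | (Real.sqrt n)⁻¹ • X n ω ∉ K} := by
        intro n hkn
        have hnpos : (0:ℝ) < n := by
          exact_mod_cast (Nat.zero_le k).trans_lt hkn
        set t : ℝ := δ * Real.sqrt n with ht0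
        have hspos : (0:ℝ) < Real.sqrt n := Real.sqrt_pos.mpr hnpos
        have htpos : (0:ℝ) < t := mul_pos hδpos hspos
        have hsub : (ξ k ⁻¹' Set.Ici t) ⊆ {ω | (Real.sqrt n)⁻¹ • X n ω ∉ K} := by
          intro ω hω
          simp only [Set.mem_preimage, Set.mem_Ici] at hω
          intro hmem
          have h1 := hk _ hmem
          have hcoord : ((Real.sqrt n)⁻¹ • X n ω) k = (Real.sqrt n)⁻¹ * ξ k ω := by
            rw [ZeroAtInftyContinuousMap.smul_apply, hX n ω k, if_pos hkn, smul_eq_mul]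
          rw [hcoord] at h1
          have h2 : δ ≤ (Real.sqrt n)⁻¹ * ξ k ω := by
            have heq : (Real.sqrt n)⁻¹ * t = δ := by
              rw [ht0]; field_simp
            calc δ = (Real.sqrt n)⁻¹ * t := heq.symm
              _ ≤ (Real.sqrt n)⁻¹ * ξ k ω :=
                  mul_le_mul_of_nonneg_left hω (inv_nonneg.mpr hspos.le)
          have h3 := h2.trans (le_abs_self _)
          linarith [abs_lt.mp h1 |>.2]
        have hgaussStep : ENNReal.ofReal ((Real.sqrt (2 * Real.pi))⁻¹ *
            Real.exp (-(t + 1)^2 / 2)) ≤ gaussianReal 0 1 (Set.Ici t) := by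
          rw [gaussianReal_apply_eq_integral 0 one_ne_zero (Set.Ici t)]
          apply ENNReal.ofReal_le_ofReal
          have hint : IntegrableOn (gaussianPDFReal 0 1) (Set.Ici t) :=
            (integrable_gaussianPDFReal 0 1).integrableOn
          have h3 : ∫ x in Set.Icc t (t+1), gaussianPDFReal 0 1 x
              ≤ ∫ x in Set.Ici t, gaussianPDFReal 0 1 x :=
            setIntegral_mono_set hint (ae_of_all _ fun x => gaussianPDFReal_nonneg 0 1 x)
              (HasSubset.Subset.eventuallyLE Set.Icc_subset_Ici_self)
          refine le_trans ?_ h3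
          have h4 : ∀ x ∈ Set.Icc t (t+1),
              (Real.sqrt (2*Real.pi))⁻¹ * Real.exp (-(t+1)^2/2) ≤ gaussianPDFReal 0 1 x := by
            intro x hx
            obtain ⟨hx1, hx2⟩ := hx
            simp only [gaussianPDFReal, NNReal.coe_one, mul_one, sub_zero]
            have hxpos : 0 ≤ x := le_trans htpos.le hx1
            gcongr
          calc (Real.sqrt (2*Real.pi))⁻¹ * Real.exp (-(t+1)^2/2)
              = ∫ _ in Set.Icc t (t+1),
                  (Real.sqrt (2*Real.pi))⁻¹ * Real.exp (-(t+1)^2/2) := by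
                rw [setIntegral_const, Real.volume_real_Icc]
                simp
            _ ≤ ∫ x in Set.Icc t (t+1), gaussianPDFReal 0 1 x := by
                apply setIntegral_mono_on ((integrableOn_const_iff (C := (Real.sqrt (2*Real.pi))⁻¹ * Real.exp (-(t+1)^2/2))).mpr (Or.inr ?_))
                  (hint.mono_set Set.Icc_subset_Ici_self) measurableSet_Icc h4
                rw [Real.volume_Icc]
                exact ENNReal.ofReal_lt_top
        calc ENNReal.ofReal ((Real.sqrt (2 * Real.pi))⁻¹ *
              Real.exp (-(δ * Real.sqrt n + 1)^2 / 2))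
            ≤ gaussianReal 0 1 (Set.Ici t) := hgaussStep
          _ = P (ξ k ⁻¹' Set.Ici t) := by
              rw [← hgauss k, Measure.map_apply (hmeas k) measurableSet_Ici]
          _ ≤ P {ω | (Real.sqrt n)⁻¹ • X n ω ∉ K} := measure_mono hsub
      -- Step B: real analytic bound
      have stepB : ∀ᶠ n : ℕ in atTop,
          -ε ≤ (n : ℝ)⁻¹ * (L - (δ * Real.sqrt n + 1)^2 / 2) := by
        have h1 : Tendsto (fun n : ℕ => ((n:ℝ))⁻¹) atTop (𝓝 0) :=
          tendsto_inv_atTop_nhds_zero_nat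
        have h2 : Tendsto (fun n : ℕ => (Real.sqrt n)⁻¹) atTop (𝓝 0) := by
          apply Tendsto.inv_tendsto_atTop
          apply tendsto_atTop_atTop.mpr
          intro b
          refine ⟨⌈b^2⌉₊ + 1, fun n hn => ?_⟩
          rcases le_or_gt b 0 with hb | hb
          · exact hb.trans (Real.sqrt_nonneg _)
          · rw [show b = Real.sqrt (b^2) from (Real.sqrt_sq hb.le).symm]
            apply Real.sqrt_le_sqrt
            calc b^2 ≤ (⌈b^2⌉₊:ℝ) := Nat.le_ceil _
              _ ≤ n := by exact_mod_cast Nat.le_of_succ_le hn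
        have hg : Tendsto (fun n : ℕ =>
            (L - 1/2) * ((n:ℝ))⁻¹ - δ * (Real.sqrt n)⁻¹ - δ^2/2) atTop (𝓝 (-(δ^2/2))) := by
          have := ((h1.const_mul (L - 1/2)).sub (h2.const_mul δ)).sub
            (tendsto_const_nhds (x := δ^2/2))
          simpa using this
        have hlt : -ε < -(δ^2/2) := by nlinarith
        filter_upwards [hg.eventually_const_lt hlt, eventually_ge_atTop 1] with n hn hn1
        have hnpos : (0:ℝ) < n := by exact_mod_cast hn1
        set s : ℝ := Real.sqrt n with hs0
        have hs : s * s = (n:ℝ) := Real.mul_self_sqrt (Nat.cast_nonneg n)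
        have hspos : (0:ℝ) < s := Real.sqrt_pos.mpr hnpos
        have heq : (n:ℝ)⁻¹ * (L - (δ * s + 1)^2 / 2)
            = (L - 1/2) * ((n:ℝ))⁻¹ - δ * s⁻¹ - δ^2/2 := by
          rw [← hs]
          field_simp
          ring
        linarith [hn, heq.ge, heq.le]
      -- combine
      apply le_liminf_of_le (by isBoundedDefault)
      filter_upwards [stepB, eventually_gt_atTop k, eventually_gt_atTop 0] with n hB hkn hn0
      have hppos : (0:ℝ) < (Real.sqrt (2 * Real.pi))⁻¹ *
          Real.exp (-(δ * Real.sqrt n + 1)^2 / 2) := by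
        have := Real.sqrt_pos.mpr (by positivity : (0:ℝ) < 2 * Real.pi)
        positivity
      have hlog : ((L - (δ * Real.sqrt n + 1)^2 / 2 : ℝ) : EReal) ≤
          ENNReal.log (P {ω | (Real.sqrt n)⁻¹ • X n ω ∉ K}) := by
        have h1 := ENNReal.log_monotone (stepA n hkn)
        rw [ENNReal.log_ofReal_of_pos hppos, Real.log_mul (by positivity) (Real.exp_ne_zero _),
          Real.log_exp, ← hL] at h1
        have heq : L + -(δ * Real.sqrt n + 1)^2/2 = L - (δ * Real.sqrt n + 1)^2/2 := by ring
        rwa [heq] at h1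
      have h2 : (0 : EReal) ≤ (((n : ℝ)⁻¹ : ℝ) : EReal) := by
        exact_mod_cast inv_nonneg.mpr (Nat.cast_nonneg n)
      calc ((-ε : ℝ) : EReal)
          ≤ (((n : ℝ)⁻¹ * (L - (δ * Real.sqrt n + 1)^2 / 2) : ℝ) : EReal) := by
            exact_mod_cast hB
        _ = (((n : ℝ)⁻¹ : ℝ) : EReal) * ((L - (δ * Real.sqrt n + 1)^2 / 2 : ℝ) : EReal) :=
            EReal.coe_mul _ _
        _ ≤ F n := mul_le_mul_of_nonneg_left hlog h2
    by_contra h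
    push_neg at h
    obtain ⟨r, hr1, hr2⟩ := EReal.exists_between_coe_real h
    have hrneg : r < 0 := by exact_mod_cast (hr2.trans_eq rfl : (r:EReal) < (0:EReal))
    have := key (-r) (by linarith)
    rw [neg_neg] at this
    exact absurd (this.trans_lt hr1).false id
end

section
/- Let (ξ_k) be i.i.d. standard Gaussians and X_n = (ξ_1,…,ξ_n,0,0,…) ∈ c₀. For every θ = (θ_k) ∈ ℓ¹ and speed g_n = n, the limit lim_{n→∞} (1/n) log E[exp(n^{1/2} ⟨θ, X_n⟩)] exists and equals (1/2)∑_{k=1}^∞ θ_k² < ∞. (Thus finiteness of the limiting log-Laplace transform on all of E' = ℓ¹ does not imply exponential tightness in infinite dimensions.) -/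
open MeasureTheory ProbabilityTheory Filter Real
open scoped ENNReal NNReal Topology

lemma gauss_mgf_aux (t : ℝ) :
    ∫ x, Real.exp (t * x) ∂(gaussianReal 0 1) = Real.exp (t ^ 2 / 2) := by
  rw [gaussianReal_of_var_ne_zero 0 one_ne_zero]
  have hd : gaussianPDF 0 1 = fun x => ((gaussianPDFReal 0 1 x).toNNReal : ℝ≥0∞) := rfl
  rw [hd, integral_withDensity_eq_integral_smul
    ((measurable_gaussianPDFReal 0 1).real_toNNReal) _]
  have heq : ∀ x : ℝ, (gaussianPDFReal 0 1 x).toNNReal • Real.exp (t * x)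
      = Real.exp (t ^ 2 / 2) * gaussianPDFReal t 1 x := by
    intro x
    rw [NNReal.smul_def, smul_eq_mul, Real.coe_toNNReal _ (gaussianPDFReal_nonneg _ _ _)]
    simp only [gaussianPDFReal, NNReal.coe_one, mul_one, sub_zero]
    rw [mul_assoc, ← Real.exp_add,
      show Real.exp (t ^ 2 / 2) * ((√(2 * π))⁻¹ * Real.exp (-(x - t) ^ 2 / 2))
        = (√(2 * π))⁻¹ * Real.exp (t ^ 2 / 2 + -(x - t) ^ 2 / 2) by rw [Real.exp_add]; ring]
    congr 1
    ring
  simp_rw [heq]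
  rw [integral_const_mul, integral_gaussianPDFReal_eq_one t one_ne_zero, mul_one]


/-- With `ξ_k` i.i.d. standard Gaussians and `X_n = (ξ_1,…,ξ_n,0,0,…) ∈ c₀`, for every
`θ ∈ ℓ¹` the normalized log-Laplace transform at speed `g_n = n` converges:
`(1/n) log E[exp(n^{1/2}⟨θ,X_n⟩)] → (1/2)∑_k θ_k² < ∞`. -/
theorem stmt_15 {Ω : Type*} [MeasurableSpace Ω] (P : Measure Ω) [IsProbabilityMeasure P]
    (ξ : ℕ → Ω → ℝ) (hmeas : ∀ k, Measurable (ξ k))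
    (hindep : iIndepFun ξ P)
    (hgauss : ∀ k, P.map (ξ k) = gaussianReal 0 1) :
    ∀ θ : ℕ → ℝ, Summable (fun k => |θ k|) →
      Summable (fun k => (θ k) ^ 2) ∧
      Tendsto (fun n : ℕ => (n : ℝ)⁻¹ *
          Real.log (∫ ω, Real.exp (Real.sqrt n * ∑ k ∈ Finset.range n, θ k * ξ k ω) ∂P))
        atTop (𝓝 ((1/2) * ∑' k, (θ k) ^ 2)) := by
  intro θ hθ
  -- summability of squares
  have hsq : Summable (fun k => (θ k) ^ 2) := by
    refine Summable.of_nonneg_of_le (fun k => sq_nonneg _)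
      (fun k => ?_) (hθ.mul_left (∑' k, |θ k|))
    have h1 : |θ k| ≤ ∑' k, |θ k| := Summable.le_tsum hθ k (fun j _ => abs_nonneg _)
    calc (θ k) ^ 2 = |θ k| * |θ k| := by rw [← sq_abs, sq]
    _ ≤ (∑' k, |θ k|) * |θ k| := mul_le_mul_of_nonneg_right h1 (abs_nonneg _)
  refine ⟨hsq, ?_⟩
  set Y : ℕ → Ω → ℝ := fun k ω => θ k * ξ k ω with hY
  have hYmeas : ∀ k, Measurable (Y k) := fun k => (hmeas k).const_mul _
  have hYindep : iIndepFun Y P :=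
    hindep.comp (fun k x => θ k * x) (fun k => measurable_const_mul _)
  have hmgfY : ∀ (k : ℕ) (t : ℝ), mgf (Y k) P t = Real.exp ((t * θ k) ^ 2 / 2) := by
    intro k t
    have hg : AEStronglyMeasurable (fun x : ℝ => Real.exp ((t * θ k) * x)) (P.map (ξ k)) :=
      (Real.continuous_exp.comp (continuous_const.mul continuous_id)).aestronglyMeasurable
    rw [mgf, ← gauss_mgf_aux (t * θ k), ← hgauss k,
      integral_map (hmeas k).aemeasurable hg]
    simp_rw [mul_assoc]
    rfl
  -- exact value of the integral
  have hkey : ∀ n : ℕ,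
      ∫ ω, Real.exp (Real.sqrt n * ∑ k ∈ Finset.range n, θ k * ξ k ω) ∂P
        = Real.exp (∑ k ∈ Finset.range n, (n : ℝ) * (θ k) ^ 2 / 2) := by
    intro n
    have h1 : ∫ ω, Real.exp (Real.sqrt n * ∑ k ∈ Finset.range n, θ k * ξ k ω) ∂P
        = mgf (∑ k ∈ Finset.range n, Y k) P (Real.sqrt n) := by
      rw [mgf]
      congr 1
      funext ω
      simp [Y, Finset.sum_apply]
    rw [h1, hYindep.mgf_sum hYmeas (Finset.range n)]
    simp_rw [hmgfY]
    rw [← Real.exp_sum]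
    congr 1
    refine Finset.sum_congr rfl (fun k _ => ?_)
    rw [mul_pow, Real.sq_sqrt (Nat.cast_nonneg n)]
  -- convergence
  have hev : ∀ᶠ n : ℕ in atTop, (1/2 : ℝ) * ∑ k ∈ Finset.range n, (θ k) ^ 2
      = (n : ℝ)⁻¹ * Real.log (∫ ω, Real.exp (Real.sqrt n * ∑ k ∈ Finset.range n, θ k * ξ k ω) ∂P) := by
    filter_upwards [eventually_ge_atTop 1] with n hn
    have hn0 : (n : ℝ) ≠ 0 := Nat.cast_ne_zero.mpr (by omega)
    rw [hkey n, Real.log_exp]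
    rw [Finset.mul_sum, Finset.mul_sum]
    refine Finset.sum_congr rfl (fun k _ => ?_)
    field_simp
  exact Tendsto.congr' hev ((hsq.hasSum.tendsto_sum_nat).const_mul (1/2 : ℝ))
end

section
/- Let (ξ_k) be i.i.d. standard Gaussians, (a_k) positive with a_k → 0, X_n = (a_1ξ_1,…,a_nξ_n,0,0,…) ∈ c₀, and g a speed function with g_n ≥ M log n for all n ≥ 2 and some M > 0. Then (g_n^{-1/2} X_n)_n is exponentially tight at speed g: for every R > 0 there is a compact K_R ⊆ c₀ and a constant C such that P(g_n^{-1/2} X_n ∉ K_R) ≤ C·exp(−R g_n) for all n. -/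
open MeasureTheory ProbabilityTheory Filter
open scoped ENNReal NNReal Topology

/-- Upper tail bound for the standard Gaussian. -/
lemma gauss_upper_tail_aux (t : ℝ) (ht : 0 ≤ t) :
    gaussianReal 0 1 (Set.Ici t) ≤ ENNReal.ofReal (Real.exp (-(t ^ 2) / 2)) := by
  rw [gaussianReal_of_var_ne_zero 0 one_ne_zero, withDensity_apply _ measurableSet_Ici]
  calc ∫⁻ x in Set.Ici t, gaussianPDF 0 1 x
      ≤ ∫⁻ x in Set.Ici t,
          ENNReal.ofReal (Real.exp (-(t ^ 2) / 2)) * gaussianPDF t 1 x := by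
        refine setLIntegral_mono ((measurable_gaussianPDF t 1).const_mul _) fun x hx => ?_
        simp only [gaussianPDF]
        rw [mul_comm, ← ENNReal.ofReal_mul (gaussianPDFReal_nonneg t 1 x)]
        refine ENNReal.ofReal_le_ofReal ?_
        simp only [gaussianPDFReal]
        have hx' : t ≤ x := hx
        have hE : Real.exp (-(x - 0) ^ 2 / (2 * ((1:ℝ≥0):ℝ))) ≤
            Real.exp (-(x - t) ^ 2 / (2 * ((1:ℝ≥0):ℝ))) * Real.exp (-t ^ 2 / 2) := by
          rw [← Real.exp_add]
          refine Real.exp_le_exp.2 ?_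
          have h0 : 0 ≤ t * (x - t) := mul_nonneg ht (by linarith)
          push_cast
          nlinarith
        calc (√(2 * Real.pi * ((1:ℝ≥0):ℝ)))⁻¹ * Real.exp (-(x - 0) ^ 2 / (2 * ((1:ℝ≥0):ℝ)))
            ≤ (√(2 * Real.pi * ((1:ℝ≥0):ℝ)))⁻¹ *
              (Real.exp (-(x - t) ^ 2 / (2 * ((1:ℝ≥0):ℝ))) * Real.exp (-t ^ 2 / 2)) :=
              mul_le_mul_of_nonneg_left hE (by positivity)
          _ = _ := (mul_assoc _ _ _).symm
    _ = ENNReal.ofReal (Real.exp (-(t ^ 2) / 2)) * ∫⁻ x in Set.Ici t, gaussianPDF t 1 x :=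
        lintegral_const_mul _ (measurable_gaussianPDF t 1)
    _ ≤ ENNReal.ofReal (Real.exp (-(t ^ 2) / 2)) * ∫⁻ x, gaussianPDF t 1 x := by
        gcongr
        exact Measure.restrict_le_self
    _ = ENNReal.ofReal (Real.exp (-(t ^ 2) / 2)) := by
        rw [lintegral_gaussianPDF_eq_one t one_ne_zero, mul_one]

/-- Lower tail bound for the standard Gaussian. -/
lemma gauss_lower_tail_aux (t : ℝ) (ht : 0 ≤ t) :
    gaussianReal 0 1 (Set.Iic (-t)) ≤ ENNReal.ofReal (Real.exp (-(t ^ 2) / 2)) := by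
  rw [gaussianReal_of_var_ne_zero 0 one_ne_zero, withDensity_apply _ measurableSet_Iic]
  calc ∫⁻ x in Set.Iic (-t), gaussianPDF 0 1 x
      ≤ ∫⁻ x in Set.Iic (-t),
          ENNReal.ofReal (Real.exp (-(t ^ 2) / 2)) * gaussianPDF (-t) 1 x := by
        refine setLIntegral_mono ((measurable_gaussianPDF (-t) 1).const_mul _) fun x hx => ?_
        simp only [gaussianPDF]
        rw [mul_comm, ← ENNReal.ofReal_mul (gaussianPDFReal_nonneg (-t) 1 x)]
        refine ENNReal.ofReal_le_ofReal ?_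
        simp only [gaussianPDFReal]
        have hx' : x ≤ -t := hx
        have hE : Real.exp (-(x - 0) ^ 2 / (2 * ((1:ℝ≥0):ℝ))) ≤
            Real.exp (-(x - -t) ^ 2 / (2 * ((1:ℝ≥0):ℝ))) * Real.exp (-t ^ 2 / 2) := by
          rw [← Real.exp_add]
          refine Real.exp_le_exp.2 ?_
          have h0 : t * (x + t) ≤ 0 := mul_nonpos_of_nonneg_of_nonpos ht (by linarith)
          push_cast
          nlinarith
        calc (√(2 * Real.pi * ((1:ℝ≥0):ℝ)))⁻¹ * Real.exp (-(x - 0) ^ 2 / (2 * ((1:ℝ≥0):ℝ)))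
            ≤ (√(2 * Real.pi * ((1:ℝ≥0):ℝ)))⁻¹ *
              (Real.exp (-(x - -t) ^ 2 / (2 * ((1:ℝ≥0):ℝ))) * Real.exp (-t ^ 2 / 2)) :=
              mul_le_mul_of_nonneg_left hE (by positivity)
          _ = _ := (mul_assoc _ _ _).symm
    _ = ENNReal.ofReal (Real.exp (-(t ^ 2) / 2)) * ∫⁻ x in Set.Iic (-t), gaussianPDF (-t) 1 x :=
        lintegral_const_mul _ (measurable_gaussianPDF (-t) 1)
    _ ≤ ENNReal.ofReal (Real.exp (-(t ^ 2) / 2)) * ∫⁻ x, gaussianPDF (-t) 1 x := by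
        gcongr
        exact Measure.restrict_le_self
    _ = ENNReal.ofReal (Real.exp (-(t ^ 2) / 2)) := by
        rw [lintegral_gaussianPDF_eq_one (-t) one_ne_zero, mul_one]

/-- Two-sided tail bound for the standard Gaussian. -/
lemma gauss_abs_tail_aux (t : ℝ) (ht : 0 ≤ t) :
    gaussianReal 0 1 {x : ℝ | t ≤ |x|} ≤ ENNReal.ofReal (2 * Real.exp (-(t ^ 2) / 2)) := by
  have hsub : {x : ℝ | t ≤ |x|} ⊆ Set.Ici t ∪ Set.Iic (-t) := by
    intro x hx
    simp only [Set.mem_setOf_eq] at hx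
    rcases abs_cases x with ⟨h1, _⟩ | ⟨h1, _⟩
    · exact Or.inl (by simp [Set.mem_Ici]; linarith)
    · exact Or.inr (by simp [Set.mem_Iic]; linarith)
  calc gaussianReal 0 1 {x : ℝ | t ≤ |x|}
      ≤ gaussianReal 0 1 (Set.Ici t ∪ Set.Iic (-t)) := measure_mono hsub
    _ ≤ gaussianReal 0 1 (Set.Ici t) + gaussianReal 0 1 (Set.Iic (-t)) := measure_union_le _ _
    _ ≤ ENNReal.ofReal (Real.exp (-(t ^ 2) / 2)) + ENNReal.ofReal (Real.exp (-(t ^ 2) / 2)) :=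
        add_le_add (gauss_upper_tail_aux t ht) (gauss_lower_tail_aux t ht)
    _ = ENNReal.ofReal (2 * Real.exp (-(t ^ 2) / 2)) := by
        rw [← ENNReal.ofReal_add (Real.exp_nonneg _) (Real.exp_nonneg _)]
        ring_nf

/-- The "cube" `{x ∈ c₀ : |x k| ≤ b k}` is compact when `b k → 0`. -/
lemma isCompact_cube_aux (b : ℕ → ℝ) (hb : ∀ k, 0 ≤ b k) (hb0 : Tendsto b atTop (𝓝 0)) :
    IsCompact {x : ZeroAtInftyContinuousMap ℕ ℝ | ∀ k, |x k| ≤ b k} := by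
  have hzero : ∀ f : (k : ℕ) → Set.Icc (-b k) (b k),
      Tendsto (fun k => (f k : ℝ)) (cocompact ℕ) (𝓝 0) := by
    intro f
    rw [cocompact_eq_atTop]
    refine squeeze_zero_norm (fun k => ?_) hb0
    rw [Real.norm_eq_abs, abs_le]
    exact ⟨(f k).2.1, (f k).2.2⟩
  let T : ((k : ℕ) → Set.Icc (-b k) (b k)) → ZeroAtInftyContinuousMap ℕ ℝ :=
    fun f => ⟨⟨fun k => (f k : ℝ), continuous_of_discreteTopology⟩, hzero f⟩
  have hT : Continuous T := by
    rw [continuous_iff_continuousAt]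
    intro f
    rw [ContinuousAt, Metric.tendsto_nhds]
    intro ε hε
    obtain ⟨N, hN⟩ : ∃ N : ℕ, ∀ k ≥ N, b k < ε / 3 :=
      eventually_atTop.1 (hb0.eventually_lt_const (by linarith))
    have hev : ∀ᶠ h in 𝓝 f, ∀ k ∈ Finset.range N, dist ((h k : ℝ)) ((f k : ℝ)) < ε / 2 := by
      rw [eventually_all_finset]
      intro k _
      have hc : Continuous fun h : (k : ℕ) → Set.Icc (-b k) (b k) => (h k : ℝ) :=
        continuous_subtype_val.comp (continuous_apply k)
      have := hc.continuousAt (x := f)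
        (Metric.ball_mem_nhds ((f k : ℝ)) (show (0:ℝ) < ε / 2 by positivity))
      filter_upwards [this] with h hh
      exact Metric.mem_ball.1 hh
    filter_upwards [hev] with h hh
    have hle : dist (T h) (T f) ≤ 2 * ε / 3 := by
      rw [← ZeroAtInftyContinuousMap.dist_toBCF_eq_dist]
      refine (BoundedContinuousFunction.dist_le (by positivity)).2 fun k => ?_
      show dist ((h k : ℝ)) ((f k : ℝ)) ≤ 2 * ε / 3
      by_cases hk : k < N
      · exact (hh k (Finset.mem_range.2 hk)).le.trans (by linarith)
      · push_neg at hk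
        have h1 : |(h k : ℝ)| ≤ b k := abs_le.2 ⟨(h k).2.1, (h k).2.2⟩
        have h2 : |(f k : ℝ)| ≤ b k := abs_le.2 ⟨(f k).2.1, (f k).2.2⟩
        have h3 := hN k hk
        calc dist ((h k : ℝ)) ((f k : ℝ)) = |(h k : ℝ) - (f k : ℝ)| := Real.dist_eq _ _
          _ ≤ |(h k : ℝ)| + |(f k : ℝ)| := abs_sub _ _
          _ ≤ 2 * ε / 3 := by linarith
    linarith [hle]
  have heq : {x : ZeroAtInftyContinuousMap ℕ ℝ | ∀ k, |x k| ≤ b k} = Set.range T := by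
    ext x
    constructor
    · intro hx
      refine ⟨fun k => ⟨x k, ?_⟩, ?_⟩
      · rw [Set.mem_Icc]
        exact abs_le.1 (hx k)
      · exact ZeroAtInftyContinuousMap.ext fun k => rfl
    · rintro ⟨f, rfl⟩ k
      exact abs_le.2 ⟨(f k).2.1, (f k).2.2⟩
  rw [heq]
  exact isCompact_range hT

/-- With `ξ_k` i.i.d. standard Gaussians, `a_k > 0`, `a_k → 0`,
`X_n = (a_1ξ_1,…,a_nξ_n,0,0,…) ∈ c₀` and a speed function `g` with `g_n ≥ M log n`,
the sequence `(g_n^{-1/2} X_n)` is exponentially tight at speed `g` (up to a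
multiplicative constant). -/
theorem stmt_17 {Ω : Type*} [MeasurableSpace Ω] (P : Measure Ω) [IsProbabilityMeasure P]
    (ξ : ℕ → Ω → ℝ) (hmeas : ∀ k, Measurable (ξ k))
    (hindep : iIndepFun ξ P)
    (hgauss : ∀ k, P.map (ξ k) = gaussianReal 0 1)
    (a : ℕ → ℝ) (ha : ∀ k, 0 < a k) (ha0 : Tendsto a atTop (𝓝 0))
    (X : ℕ → Ω → ZeroAtInftyContinuousMap ℕ ℝ)
    (hX : ∀ n ω k, X n ω k = if k < n then a k * ξ k ω else 0)
    (g : ℕ → ℝ) (hgpos : ∀ n, 0 < g n) (hg : Tendsto g atTop atTop)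
    (M : ℝ) (hM : 0 < M) (hglog : ∀ n : ℕ, 2 ≤ n → M * Real.log n ≤ g n) :
    ∀ R : ℝ, 0 < R →
      ∃ K : Set (ZeroAtInftyContinuousMap ℕ ℝ), ∃ C : ℝ, IsCompact K ∧ 0 < C ∧
        ∀ n : ℕ, P {ω | (Real.sqrt (g n))⁻¹ • X n ω ∉ K}
          ≤ ENNReal.ofReal (C * Real.exp (-R * g n)) := by
  intro R hR
  have hRM : 0 < R + 1 / M := by positivity
  set c : ℝ := Real.sqrt (2 * (R + 1 / M)) with hc_def
  have hc : 0 < c := Real.sqrt_pos.2 (by positivity)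
  have hc2 : c ^ 2 = 2 * (R + 1 / M) := Real.sq_sqrt (by positivity)
  set b : ℕ → ℝ := fun k => c * a k with hb_def
  have hbpos : ∀ k, 0 ≤ b k := fun k => le_of_lt (mul_pos hc (ha k))
  have hb0 : Tendsto b atTop (𝓝 0) := by
    have := ha0.const_mul c
    simpa using this
  refine ⟨{x : ZeroAtInftyContinuousMap ℕ ℝ | ∀ k, |x k| ≤ b k}, 2,
    isCompact_cube_aux b hbpos hb0, by norm_num, fun n => ?_⟩
  set s : ℝ := Real.sqrt (g n) with hs_def
  have hs : 0 < s := Real.sqrt_pos.2 (hgpos n)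
  set t : ℝ := c * s with ht_def
  have ht : 0 ≤ t := le_of_lt (mul_pos hc hs)
  -- Step 1: event inclusion
  have hsub : {ω | (Real.sqrt (g n))⁻¹ • X n ω ∉
        {x : ZeroAtInftyContinuousMap ℕ ℝ | ∀ k, |x k| ≤ b k}}
      ⊆ ⋃ k ∈ Finset.range n, ξ k ⁻¹' {x : ℝ | t ≤ |x|} := by
    intro ω hω
    simp only [Set.mem_setOf_eq] at hω
    push_neg at hω
    obtain ⟨k, hk⟩ := hω
    rw [ZeroAtInftyContinuousMap.smul_apply, hX n ω k] at hk
    by_cases hkn : k < n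
    · rw [if_pos hkn] at hk
      have hk' : c * a k < s⁻¹ * (a k * |ξ k ω|) := by
        have : |s⁻¹ • (a k * ξ k ω)| = s⁻¹ * (a k * |ξ k ω|) := by
          rw [smul_eq_mul, abs_mul, abs_mul, abs_of_pos (inv_pos.2 hs),
            abs_of_pos (ha k)]
        rw [← hs_def] at hk
        calc c * a k = b k := rfl
          _ < |s⁻¹ • (a k * ξ k ω)| := hk
          _ = s⁻¹ * (a k * |ξ k ω|) := this
      have htk : t ≤ |ξ k ω| := by
        have h1 : s * (c * a k) < s * (s⁻¹ * (a k * |ξ k ω|)) :=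
          mul_lt_mul_of_pos_left hk' hs
        rw [← mul_assoc s s⁻¹, mul_inv_cancel₀ hs.ne', one_mul] at h1
        have h2 : a k * (c * s) < a k * |ξ k ω| := by nlinarith [h1]
        exact le_of_lt ((mul_lt_mul_iff_right₀ (ha k)).1 h2)
      exact Set.mem_biUnion (Finset.mem_range.2 hkn) htk
    · rw [if_neg hkn] at hk
      simp only [smul_zero, abs_zero] at hk
      exact absurd (hbpos k) (not_le.2 hk)
  -- Step 2: union bound and Gaussian tail
  have htail : ∀ k, P (ξ k ⁻¹' {x : ℝ | t ≤ |x|})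
      ≤ ENNReal.ofReal (2 * Real.exp (-(t ^ 2) / 2)) := by
    intro k
    have hset : MeasurableSet {x : ℝ | t ≤ |x|} :=
      measurableSet_le measurable_const measurable_abs
    rw [← Measure.map_apply (hmeas k) hset, hgauss k]
    exact gauss_abs_tail_aux t ht
  have hcount : P {ω | (Real.sqrt (g n))⁻¹ • X n ω ∉
        {x : ZeroAtInftyContinuousMap ℕ ℝ | ∀ k, |x k| ≤ b k}}
      ≤ (n : ℝ≥0∞) * ENNReal.ofReal (2 * Real.exp (-(t ^ 2) / 2)) := by
    calc P _ ≤ P (⋃ k ∈ Finset.range n, ξ k ⁻¹' {x : ℝ | t ≤ |x|}) := measure_mono hsub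
      _ ≤ ∑ k ∈ Finset.range n, P (ξ k ⁻¹' {x : ℝ | t ≤ |x|}) :=
          measure_biUnion_finset_le _ _
      _ ≤ ∑ _k ∈ Finset.range n, ENNReal.ofReal (2 * Real.exp (-(t ^ 2) / 2)) :=
          Finset.sum_le_sum fun k _ => htail k
      _ = (n : ℝ≥0∞) * ENNReal.ofReal (2 * Real.exp (-(t ^ 2) / 2)) := by
          rw [Finset.sum_const, Finset.card_range, nsmul_eq_mul]
  refine hcount.trans ?_
  -- Step 3: arithmetic
  have ht2 : t ^ 2 = 2 * (R + 1 / M) * g n := by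
    rw [ht_def, mul_pow, hc2, hs_def, Real.sq_sqrt (le_of_lt (hgpos n))]
  have hkey : (n : ℝ) ≤ Real.exp (g n / M) := by
    rcases Nat.eq_zero_or_pos n with hn0 | hn1
    · rw [hn0]; simpa using Real.exp_nonneg (g 0 / M)
    · have hlogn : M * Real.log n ≤ g n := by
        rcases eq_or_lt_of_le (show 1 ≤ n from hn1) with h1 | h2
        · rw [← h1]
          simp only [Nat.cast_one, Real.log_one, mul_zero]
          exact (hgpos 1).le
        · exact hglog n h2
      have : Real.log n ≤ g n / M := by
        rw [le_div_iff₀ hM]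
        linarith [hlogn]
      calc (n : ℝ) = Real.exp (Real.log n) :=
            (Real.exp_log (by exact_mod_cast hn1)).symm
        _ ≤ Real.exp (g n / M) := Real.exp_le_exp.2 this
  rw [← ENNReal.ofReal_natCast n, ← ENNReal.ofReal_mul (Nat.cast_nonneg n)]
  refine ENNReal.ofReal_le_ofReal ?_
  have hexp : Real.exp (-(t ^ 2) / 2) = Real.exp (-(g n / M)) * Real.exp (-R * g n) := by
    rw [← Real.exp_add]
    congr 1
    rw [ht2]
    field_simp
    ring
  rw [hexp]
  have h1 : (n : ℝ) * Real.exp (-(g n / M)) ≤ 1 := by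
    have := mul_le_mul_of_nonneg_right hkey (Real.exp_nonneg (-(g n / M)))
    rwa [← Real.exp_add, add_neg_cancel, Real.exp_zero] at this
  calc (n : ℝ) * (2 * (Real.exp (-(g n / M)) * Real.exp (-R * g n)))
      = 2 * ((n : ℝ) * Real.exp (-(g n / M))) * Real.exp (-R * g n) := by ring
    _ ≤ 2 * 1 * Real.exp (-R * g n) := by
        have hh : 2 * ((n : ℝ) * Real.exp (-(g n / M))) ≤ 2 * 1 := by linarith
        exact mul_le_mul_of_nonneg_right hh (Real.exp_nonneg _)
    _ = 2 * Real.exp (-R * g n) := by ring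
end

section
/- Let E be a separable Banach space, (μ_n) an exponentially tight sequence of probability measures at speed g such that Λ(θ) := lim_n (1/g_n) log ∫_E e^{g_n⟨θ,x⟩} dμ_n(x) exists for all θ ∈ E' and each μ_n is the law of g_n^{-1/2} times a centered Gaussian variable whose laws converge weakly. If Λ ≡ 0 (i.e. Var(⟨θ,X_n⟩) → 0 for all θ), then for every δ > 0, limsup_n (1/g_n) log μ_n({x : ‖x‖ ≥ δ}) = −∞. -/
open MeasureTheory ProbabilityTheory Filter
open scoped ENNReal NNReal Topology

lemma aux_integrable_exp_gaussianReal (c m : ℝ) (v : ℝ≥0) :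
    Integrable (fun x => Real.exp (c * x)) (gaussianReal m v) := by
  by_cases hv : v = 0
  · subst hv
    rw [gaussianReal_zero_var]
    refine (integrable_const (Real.exp (c * m))).congr ?_
    exact (MeasureTheory.ae_eq_dirac (fun x : ℝ => Real.exp (c * x))).symm
  · rw [gaussianReal_of_var_ne_zero _ hv]
    rw [integrable_withDensity_iff (measurable_gaussianPDF _ _)
      (Filter.Eventually.of_forall fun x => ENNReal.ofReal_lt_top)]
    have hv0 : (0:ℝ) < (v:ℝ) := by
      exact_mod_cast pos_iff_ne_zero.mpr hv
    have hb : (0:ℝ) < (2*(v:ℝ))⁻¹ := by positivity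
    have heq : ∀ x : ℝ, Real.exp (c*x) * (gaussianPDF m v x).toReal
        = ((Real.sqrt (2 * Real.pi * v))⁻¹ * Real.exp (c*m + c^2*(v:ℝ)/2))
          * Real.exp (-(2*(v:ℝ))⁻¹ * (x - (m + c*(v:ℝ)))^2) := by
      intro x
      rw [gaussianPDF, ENNReal.toReal_ofReal (gaussianPDFReal_nonneg _ _ _), gaussianPDFReal]
      rw [mul_comm (Real.exp (c*x)) _, mul_assoc, ← Real.exp_add,
        mul_assoc ((Real.sqrt (2 * Real.pi * (v:ℝ)))⁻¹), ← Real.exp_add]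
      congr 1
      field_simp
      ring
    have hi : Integrable (fun x : ℝ =>
        ((Real.sqrt (2 * Real.pi * v))⁻¹ * Real.exp (c*m + c^2*(v:ℝ)/2))
          * Real.exp (-(2*(v:ℝ))⁻¹ * (x - (m + c*(v:ℝ)))^2)) := by
      exact ((integrable_exp_neg_mul_sq hb).comp_sub_right (m + c*(v:ℝ))).const_mul _
    exact hi.congr (Filter.Eventually.of_forall fun x => (heq x).symm)

/-- Gärtner–Ellis type estimate: if `μ_n`, the laws of `g_n^{-1/2}` times centered
Gaussian variables whose laws converge weakly, form an exponentially tight sequence at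
speed `g` and the limiting log-Laplace functional `Λ` vanishes identically, then
`(1/g_n) log μ_n{‖x‖ ≥ δ} → −∞` for every `δ > 0`. -/
theorem stmt_19 {E : Type*} [NormedAddCommGroup E] [NormedSpace ℝ E]
    [CompleteSpace E] [SecondCountableTopology E]
    [MeasurableSpace E] [BorelSpace E]
    (g : ℕ → ℝ) (hgpos : ∀ n, 0 < g n) (hg : Tendsto g atTop atTop)
    (ν : ℕ → Measure E) (hνprob : ∀ n, IsProbabilityMeasure (ν n))
    (hνgauss : ∀ n, ∀ θ : E →L[ℝ] ℝ, ∃ v : NNReal, (ν n).map θ = gaussianReal 0 v)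
    (νlim : Measure E) (hνlim : IsProbabilityMeasure νlim)
    (hνconv : ∀ f : BoundedContinuousFunction E ℝ,
      Tendsto (fun n => ∫ x, f x ∂(ν n)) atTop (𝓝 (∫ x, f x ∂νlim)))
    (μ : ℕ → Measure E)
    (hμ : ∀ n, μ n = (ν n).map (fun x => (Real.sqrt (g n))⁻¹ • x))
    (het : ∀ R : ℝ, 0 < R → ∃ K : Set E, IsCompact K ∧
      ∀ n, μ n Kᶜ ≤ ENNReal.ofReal (Real.exp (-(g n) * R)))
    (hΛ : ∀ θ : E →L[ℝ] ℝ,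
      Tendsto (fun n => (g n)⁻¹ * Real.log (∫ x, Real.exp (g n * θ x) ∂(μ n)))
        atTop (𝓝 0)) :
    ∀ δ : ℝ, 0 < δ →
      limsup (fun n => (((g n)⁻¹ : ℝ) : EReal) * ENNReal.log (μ n {x | δ ≤ ‖x‖}))
        atTop = ⊥ := by
  -- basic facts about μ n
  have hμprob : ∀ n, IsProbabilityMeasure (μ n) := fun n => by
    rw [hμ n]
    exact Measure.isProbabilityMeasure_map (continuous_const_smul _).measurable.aemeasurable
  have hmap : ∀ n (θ : E →L[ℝ] ℝ), ∃ v : NNReal, (μ n).map θ = gaussianReal 0 v := by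
    intro n θ
    obtain ⟨v, hv⟩ := hνgauss n ((Real.sqrt (g n))⁻¹ • θ)
    refine ⟨v, ?_⟩
    rw [hμ n, Measure.map_map θ.continuous.measurable (continuous_const_smul _).measurable,
      ← hv]
    congr 1
    funext x
    simp [mul_comm]
  have hint : ∀ n (θ : E →L[ℝ] ℝ), Integrable (fun x => Real.exp (θ x)) (μ n) := by
    intro n θ
    obtain ⟨v, hv⟩ := hmap n θ
    have h1 : Integrable (fun y : ℝ => Real.exp (1 * y)) ((μ n).map θ) := by
      rw [hv]; exact aux_integrable_exp_gaussianReal 1 0 v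
    have h2 := (integrable_map_measure
      (Real.continuous_exp.comp (continuous_one.mul continuous_id)).aestronglyMeasurable
      θ.continuous.measurable.aemeasurable).mp h1
    simpa [Function.comp_def] using h2
  -- the Chernoff half-space bound
  have key : ∀ n (θ : E →L[ℝ] ℝ) (a : ℝ), μ n {x | a ≤ θ x} ≤ ENNReal.ofReal
      (Real.exp (g n * ((g n)⁻¹ * Real.log (∫ x, Real.exp (g n * θ x) ∂(μ n)) - a))) := by
    intro n θ a
    haveI := hμprob n
    have hIint : Integrable (fun x => Real.exp (g n * θ x)) (μ n) := by
      have := hint n ((g n) • θ)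
      simpa using this
    have hIpos : 0 < ∫ x, Real.exp (g n * θ x) ∂(μ n) := integral_exp_pos hIint
    set I := ∫ x, Real.exp (g n * θ x) ∂(μ n) with hI
    have hexp : Real.exp (g n * ((g n)⁻¹ * Real.log I - a))
        = Real.exp (-(g n * a)) * I := by
      rw [mul_sub, ← mul_assoc, mul_inv_cancel₀ (hgpos n).ne', one_mul, Real.exp_sub,
        Real.exp_log hIpos, Real.exp_neg]
      ring
    rw [hexp]
    have heq : ∀ x : E, Real.exp (g n * θ x - g n * a)
        = Real.exp (-(g n * a)) * Real.exp (g n * θ x) := by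
      intro x; rw [← Real.exp_add]; ring_nf
    have hint' : Integrable (fun x => Real.exp (g n * θ x - g n * a)) (μ n) := by
      simp_rw [heq]; exact hIint.const_mul _
    calc μ n {x | a ≤ θ x}
        ≤ μ n {x | (1:ℝ≥0∞) ≤ ENNReal.ofReal (Real.exp (g n * θ x - g n * a))} := by
          apply measure_mono
          intro x hx
          have h0 : (0:ℝ) ≤ g n * θ x - g n * a := by
            have := mul_le_mul_of_nonneg_left hx (hgpos n).le
            linarith
          exact ENNReal.one_le_ofReal.mpr (Real.one_le_exp h0)
      _ ≤ ∫⁻ x, ENNReal.ofReal (Real.exp (g n * θ x - g n * a)) ∂(μ n) := by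
          have := mul_meas_ge_le_lintegral₀ (μ := μ n)
            (f := fun x => ENNReal.ofReal (Real.exp (g n * θ x - g n * a)))
            (ENNReal.measurable_ofReal.comp
              (Real.measurable_exp.comp
                (((measurable_const.mul θ.continuous.measurable).sub
                  measurable_const)))).aemeasurable 1
          simpa using this
      _ = ENNReal.ofReal (∫ x, Real.exp (g n * θ x - g n * a) ∂(μ n)) :=
          (ofReal_integral_eq_lintegral_ofReal hint'
            (Filter.Eventually.of_forall fun x => (Real.exp_pos _).le)).symm
      _ = ENNReal.ofReal (Real.exp (-(g n * a)) * I) := by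
          congr 1
          simp_rw [heq]
          rw [integral_const_mul]
  -- main argument
  intro δ hδ
  set S : Set E := {x | δ ≤ ‖x‖} with hS
  have hSclosed : IsClosed S := isClosed_le continuous_const continuous_norm
  set f : ℕ → EReal := fun n => (((g n)⁻¹ : ℝ) : EReal) * ENNReal.log (μ n S) with hf
  have main : ∀ c : ℝ, ∀ᶠ n in atTop, f n ≤ (c : EReal) := by
    intro c
    set R : ℝ := max 1 (1 - c) with hR
    have hRpos : 0 < R := lt_of_lt_of_le one_pos (le_max_left _ _)
    obtain ⟨K, hK, hKb⟩ := het R hRpos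
    have hKS : IsCompact (K ∩ S) := hK.inter_right hSclosed
    have hne : ∀ y : E, y ∈ K ∩ S → y ≠ 0 := by
      intro y hy h0
      have : δ ≤ ‖y‖ := hy.2
      rw [h0, norm_zero] at this
      linarith
    choose! θf hθnorm hθval using fun (y : E) (hy : y ∈ K ∩ S) => exists_dual_vector ℝ y (norm_ne_zero_iff.mpr (hne y hy))
    obtain ⟨t, ht⟩ := hKS.elim_finite_subcover (fun y : E => {x | δ/2 < θf y x})
      (fun y => isOpen_lt continuous_const (θf y).continuous) (by
        intro y hy
        refine Set.mem_iUnion.mpr ⟨y, ?_⟩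
        have : θf y y = ‖y‖ := hθval y hy
        simp only [Set.mem_setOf_eq, this]
        have : δ ≤ ‖y‖ := hy.2
        linarith)
    set s : ℝ := 2 * (R + 1) / δ with hs
    have hspos : 0 < s := by positivity
    have hev1 : ∀ᶠ n in atTop, ∀ y ∈ t,
        (g n)⁻¹ * Real.log (∫ x, Real.exp (g n * (s • θf y) x) ∂(μ n)) ≤ 1 := by
      rw [eventually_all_finset]
      intro y _
      exact ((hΛ (s • θf y)).eventually_le_const one_pos)
    have hev2 : ∀ᶠ n in atTop,
        (g n)⁻¹ * Real.log ((t.card : ℝ) + 1) ≤ 1 := by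
      have h0 : Tendsto (fun n => (g n)⁻¹ * Real.log ((t.card : ℝ) + 1)) atTop (𝓝 0) := by
        simpa using (hg.inv_tendsto_atTop).mul_const (Real.log ((t.card : ℝ) + 1))
      exact h0.eventually_le_const one_pos
    filter_upwards [hev1, hev2] with n h1 h2
    -- bound on the measure
    have hcardpos : (0:ℝ) < (t.card : ℝ) + 1 := by positivity
    have hhalf : ∀ y ∈ t, μ n {x | δ/2 < θf y x} ≤ ENNReal.ofReal (Real.exp (-(g n) * R)) := by
      intro y hy
      have step1 : {x : E | δ/2 < θf y x} ⊆ {x | R + 1 ≤ (s • θf y) x} := by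
        intro x hx
        simp only [Set.mem_setOf_eq, ContinuousLinearMap.smul_apply, smul_eq_mul]
        have h' : s * (δ/2) ≤ s * θf y x :=
          mul_le_mul_of_nonneg_left (le_of_lt hx) hspos.le
        have hsd : s * (δ/2) = R + 1 := by
          rw [hs]; field_simp
        linarith
      refine (measure_mono step1).trans ((key n (s • θf y) (R+1)).trans ?_)
      apply ENNReal.ofReal_le_ofReal
      apply Real.exp_le_exp.mpr
      have hL := h1 y hy
      have := mul_le_mul_of_nonneg_left (by linarith :
        (g n)⁻¹ * Real.log (∫ x, Real.exp (g n * (s • θf y) x) ∂(μ n)) - (R + 1)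
          ≤ 1 - (R + 1)) (hgpos n).le
      calc g n * ((g n)⁻¹ * Real.log (∫ x, Real.exp (g n * (s • θf y) x) ∂(μ n)) - (R+1))
          ≤ g n * (1 - (R + 1)) := this
        _ = -(g n) * R := by ring
    have hsplit : μ n S ≤ μ n Kᶜ + μ n (K ∩ S) := by
      have hsub : S ⊆ Kᶜ ∪ (K ∩ S) := by
        intro x hx
        by_cases hxK : x ∈ K
        · exact Or.inr ⟨hxK, hx⟩
        · exact Or.inl hxK
      exact (measure_mono hsub).trans (measure_union_le _ _)
    have hKSb : μ n (K ∩ S) ≤ (t.card : ℝ≥0∞) * ENNReal.ofReal (Real.exp (-(g n) * R)) := by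
      refine (measure_mono ht).trans ?_
      refine (measure_biUnion_finset_le t _).trans ?_
      calc (∑ y ∈ t, μ n {x | δ/2 < θf y x})
          ≤ ∑ y ∈ t, ENNReal.ofReal (Real.exp (-(g n) * R)) := Finset.sum_le_sum hhalf
        _ = (t.card : ℝ≥0∞) * ENNReal.ofReal (Real.exp (-(g n) * R)) := by
            rw [Finset.sum_const, nsmul_eq_mul]
    have hbound : μ n S ≤ ENNReal.ofReal (((t.card : ℝ) + 1) * Real.exp (-(g n) * R)) := by
      calc μ n S ≤ μ n Kᶜ + μ n (K ∩ S) := hsplit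
        _ ≤ ENNReal.ofReal (Real.exp (-(g n) * R))
            + (t.card : ℝ≥0∞) * ENNReal.ofReal (Real.exp (-(g n) * R)) :=
              add_le_add (hKb n) hKSb
        _ = ((t.card : ℝ≥0∞) + 1) * ENNReal.ofReal (Real.exp (-(g n) * R)) := by ring
        _ = ENNReal.ofReal (((t.card : ℝ) + 1) * Real.exp (-(g n) * R)) := by
            rw [ENNReal.ofReal_mul hcardpos.le]
            congr 1
            rw [ENNReal.ofReal_add (by positivity) zero_le_one]
            simp
    -- pass to logs
    have hlog : ENNReal.log (μ n S)
        ≤ ((Real.log (((t.card : ℝ) + 1) * Real.exp (-(g n) * R)) : ℝ) : EReal) := by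
      refine (ENNReal.log_monotone hbound).trans ?_
      rw [ENNReal.log_ofReal_of_pos (by positivity)]
    have hmul : f n ≤ (((g n)⁻¹ * Real.log (((t.card : ℝ) + 1) * Real.exp (-(g n) * R)) : ℝ)
        : EReal) := by
      rw [hf]
      calc (((g n)⁻¹ : ℝ) : EReal) * ENNReal.log (μ n S)
          ≤ (((g n)⁻¹ : ℝ) : EReal)
            * ((Real.log (((t.card : ℝ) + 1) * Real.exp (-(g n) * R)) : ℝ) : EReal) :=
            mul_le_mul_of_nonneg_left hlog (by exact_mod_cast inv_nonneg.mpr (hgpos n).le)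
        _ = _ := by rw [← EReal.coe_mul]
    refine hmul.trans ?_
    rw [EReal.coe_le_coe_iff]
    have hcomp : (g n)⁻¹ * Real.log (((t.card : ℝ) + 1) * Real.exp (-(g n) * R))
        = (g n)⁻¹ * Real.log ((t.card : ℝ) + 1) - R := by
      have hgne : g n ≠ 0 := (hgpos n).ne'
      rw [Real.log_mul hcardpos.ne' (Real.exp_ne_zero _), Real.log_exp, mul_add]
      field_simp
      ring
    rw [hcomp]
    have hR1 : 1 - c ≤ R := le_max_right _ _
    linarith
  -- conclude that the limsup is ⊥
  by_contra h
  have hbotlt : (⊥ : EReal) < limsup f atTop := bot_lt_iff_ne_bot.mpr h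
  obtain ⟨x, _, hx⟩ := EReal.lt_iff_exists_real_btwn.mp hbotlt
  exact absurd (limsup_le_of_le (by isBoundedDefault) (main x)) (not_le.mpr hx)
end
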